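/- arXiv:2404.09409 — 2 statements merged into one kernel-verified Lean document; each statement's English description precedes it below -/
import Mathlib

section
/- Consider the generalized short-range spin glass model with Hamiltonian H_J and inverse temperature 0 ≤ β < ∞. For any a ∈ {−1,1}^N, any vertices i, j ∈ [N], and any n ∈ ℤ_+^E, one has E[h_n(J)⟨σ_i σ_j⟩] = I_n(a) · E[h_n(J)⟨σ_i σ_j⟩], where a_e = ∏_{v∈e} a_v and I_n(a) = a_i a_j ∏_{e∈E(n)} a_e^{n_e}. In particular, if I_n(a) = −1 for some a ∈ {−1,1}^N, then the Fourier–Hermite coefficient E[h_n(J)⟨σ_i σ_j⟩] = 0. -/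
open MeasureTheory ProbabilityTheory Real Finset

noncomputable section

/-! ### Basic objects: spins, Hermite polynomials, Gaussian measures -/

/-- The `±1` spin value attached to a Boolean. -/
def spin (b : Bool) : ℝ := if b then 1 else -1

/-- Normalized Hermite polynomial `h_m = He_m / √(m!)`,
orthonormal w.r.t. the standard Gaussian measure. -/
def hermiteFn (m : ℕ) (x : ℝ) : ℝ :=
  Polynomial.aeval x (Polynomial.hermite m) / Real.sqrt (Nat.factorial m)

/-- The law of a family of i.i.d. standard Gaussians over a finite index set. -/
def gaussianPi (ι : Type*) [Fintype ι] : Measure (ι → ℝ) :=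
  Measure.pi fun _ => gaussianReal 0 1

instance (ι : Type*) [Fintype ι] : IsProbabilityMeasure (gaussianPi ι) := by
  unfold gaussianPi; infer_instance

/-- Tensorized normalized Hermite polynomial `h_n(x) = ∏_e h_{n_e}(x_e)`. -/
def hermiteProd {ι : Type*} [Fintype ι] (n : ι → ℕ) (x : ι → ℝ) : ℝ :=
  ∏ e, hermiteFn (n e) (x e)

/-- Continuous perturbation `J(t) = e^{-t} J + √(1-e^{-2t}) J'` of the disorder. -/
def contPerturb {ι : Type*} (t : ℝ) (J J' : ι → ℝ) : ι → ℝ := fun e =>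
  Real.exp (-t) * J e + Real.sqrt (1 - Real.exp (-2 * t)) * J' e

/-- Discrete perturbation `J(t)_e = B_e J_e + (1-B_e) J'_e` of the disorder. -/
def discPerturb {ι : Type*} (J J' : ι → ℝ) (B : ι → Bool) : ι → ℝ := fun e =>
  if B e then J e else J' e

/-- Bernoulli measure on `Bool` with success probability `p`. -/
def berBool (p : ℝ) : Measure Bool :=
  ENNReal.ofReal p • Measure.dirac true + ENNReal.ofReal (1 - p) • Measure.dirac false

instance (p : ℝ) : IsFiniteMeasure (berBool p) := by
  constructor
  simp only [berBool, Measure.coe_add, Pi.add_apply, Measure.smul_apply, smul_eq_mul,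
    Measure.dirac_apply' _ MeasurableSet.univ, Set.indicator_univ, Pi.one_apply, mul_one]
  exact ENNReal.add_lt_top.mpr ⟨ENNReal.ofReal_lt_top, ENNReal.ofReal_lt_top⟩

/-- Product Gaussian measure for a pair `(J, J')` of independent disorders. -/
def pairGauss (ι : Type*) [Fintype ι] : Measure ((ι → ℝ) × (ι → ℝ)) :=
  (gaussianPi ι).prod (gaussianPi ι)

/-- Product Gaussian measure for a triple of independent disorders. -/
def tripleGauss (ι : Type*) [Fintype ι] : Measure ((ι → ℝ) × (ι → ℝ) × (ι → ℝ)) :=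
  (gaussianPi ι).prod ((gaussianPi ι).prod (gaussianPi ι))

/-- Law of `(J, J', B)`: two independent Gaussian disorders together with i.i.d.
Bernoulli(`p`) variables. -/
def tripleGaussBer (ι : Type*) [Fintype ι] (p : ℝ) :
    Measure ((ι → ℝ) × (ι → ℝ) × (ι → Bool)) :=
  (gaussianPi ι).prod ((gaussianPi ι).prod (Measure.pi fun _ => berBool p))

/-! ### Spin models on hypergraphs -/

variable {N : ℕ}

/-- `σ_e = ∏_{v ∈ e} σ_v`. -/
def sigEdge (σ : Fin N → Bool) (e : Finset (Fin N)) : ℝ := ∏ v ∈ e, spin (σ v)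

/-- Hamiltonian `H_J(σ) = Σ_e ρ_{|e|}(J_e) σ_e` of the short-range model. -/
def ham (Edges : Finset (Finset (Fin N))) (ρ : ℕ → ℝ → ℝ)
    (J : Finset (Fin N) → ℝ) (σ : Fin N → Bool) : ℝ :=
  ∑ e ∈ Edges, ρ e.card (J e) * sigEdge σ e

/-- Gibbs average of an observable `f` for the Hamiltonian `H` at inverse temperature `β`. -/
def gibbs (β : ℝ) (H : (Fin N → Bool) → ℝ) (f : (Fin N → Bool) → ℝ) : ℝ :=
  (∑ σ : Fin N → Bool, f σ * Real.exp (β * H σ)) / ∑ σ : Fin N → Bool, Real.exp (β * H σ)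

/-- Gibbs average of a two-replica observable `f(σ,τ)` where `σ, τ` are sampled from the
product of the Gibbs measures of the Hamiltonians `H₁`, `H₂`. -/
def gibbs2 (β : ℝ) (H₁ H₂ : (Fin N → Bool) → ℝ)
    (f : (Fin N → Bool) → (Fin N → Bool) → ℝ) : ℝ :=
  (∑ σ : Fin N → Bool, ∑ τ : Fin N → Bool, f σ τ * Real.exp (β * H₁ σ + β * H₂ τ)) /
    ∑ σ : Fin N → Bool, ∑ τ : Fin N → Bool, Real.exp (β * H₁ σ + β * H₂ τ)

/-- Site overlap `R(σ,τ) = N⁻¹ Σ_i σ_i τ_i`. -/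
def overlap (σ τ : Fin N → Bool) : ℝ := (∑ i, spin (σ i) * spin (τ i)) / N

/-- Fourier–Hermite coefficient `φ̂_{ij}(n) = E[⟨σ_i σ_j⟩ h_n(J)]` of the two-point
correlation function. -/
def twoPointCoeff (Edges : Finset (Finset (Fin N))) (ρ : ℕ → ℝ → ℝ) (β : ℝ)
    (i j : Fin N) (n : Finset (Fin N) → ℕ) : ℝ :=
  ∫ ω, gibbs β (ham Edges ρ ω) (fun σ => spin (σ i) * spin (σ j)) * hermiteProd n ω
    ∂gaussianPi (Finset (Fin N))

/-- `E(n) = {e : n_e > 0}`. -/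
def Esupp (n : Finset (Fin N) → ℕ) : Finset (Finset (Fin N)) :=
  Finset.univ.filter fun e => n e ≠ 0

/-- `V(n)`: the vertices covered by `E(n)`. -/
def Vsupp (n : Finset (Fin N) → ℕ) : Finset (Fin N) :=
  (Esupp n).biUnion id

/-- Disorder-averaged two-replica observable under the continuous perturbation:
`E ⟨f(σ,τ)⟩_t` with `σ ~ G_J`, `τ ~ G_{J(t)}`. -/
def contExp (Edges : Finset (Finset (Fin N))) (ρ : ℕ → ℝ → ℝ) (β t : ℝ)
    (f : (Fin N → Bool) → (Fin N → Bool) → ℝ) : ℝ :=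
  ∫ ω : (Finset (Fin N) → ℝ) × (Finset (Fin N) → ℝ),
    gibbs2 β (ham Edges ρ ω.1) (ham Edges ρ (contPerturb t ω.1 ω.2)) f
    ∂pairGauss (Finset (Fin N))

/-- Disorder-averaged two-replica observable under the discrete perturbation. -/
def discExp (Edges : Finset (Finset (Fin N))) (ρ : ℕ → ℝ → ℝ) (β t : ℝ)
    (f : (Fin N → Bool) → (Fin N → Bool) → ℝ) : ℝ :=
  ∫ ω : (Finset (Fin N) → ℝ) × (Finset (Fin N) → ℝ) × (Finset (Fin N) → Bool),
    gibbs2 β (ham Edges ρ ω.1) (ham Edges ρ (discPerturb ω.1 ω.2.1 ω.2.2)) f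
    ∂tripleGaussBer (Finset (Fin N)) (Real.exp (-t))

/-! ### Berge paths, distance, balls, cycles -/

/-- `(vs, es)` is a Berge path of length `ℓ` from `v` to `w` in the hypergraph `Edges`. -/
def IsBergePath (Edges : Finset (Finset (Fin N))) (ℓ : ℕ)
    (vs : Fin (ℓ + 1) → Fin N) (es : Fin ℓ → Finset (Fin N)) (v w : Fin N) : Prop :=
  Function.Injective vs ∧ Function.Injective es ∧ (∀ k, es k ∈ Edges) ∧
    vs 0 = v ∧ vs (Fin.last ℓ) = w ∧
    ∀ k : Fin ℓ, vs k.castSucc ∈ es k ∧ vs k.succ ∈ es k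

/-- Hypergraph (Berge) distance between two vertices, `∞` if there is no path. -/
def hdist (Edges : Finset (Finset (Fin N))) (v w : Fin N) : ℕ∞ :=
  sInf {d : ℕ∞ | ∃ (ℓ : ℕ) (vs : Fin (ℓ + 1) → Fin N) (es : Fin ℓ → Finset (Fin N)),
    IsBergePath Edges ℓ vs es v w ∧ d = (ℓ : ℕ∞)}

open scoped Classical in
/-- The closed ball `B_r(v)` in the hypergraph distance. -/
def hball (Edges : Finset (Finset (Fin N))) (v : Fin N) (r : ℕ) : Finset (Fin N) :=
  Finset.univ.filter fun w => hdist Edges v w ≤ (r : ℕ∞)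

/-- The hypergraph `Edges` contains a Berge cycle. -/
def HasBergeCycle (Edges : Finset (Finset (Fin N))) : Prop :=
  ∃ (ℓ : ℕ) (vs : Fin ℓ → Fin N) (es : Fin ℓ → Finset (Fin N)),
    2 ≤ ℓ ∧ Function.Injective vs ∧ Function.Injective es ∧ (∀ k, es k ∈ Edges) ∧
      ∀ k : Fin ℓ, vs k ∈ es k ∧ vs (finRotate ℓ k) ∈ es k

/-- `min(d, c)` where `d ∈ ℕ∞` and `c ∈ ℝ` (equal to `c` if `d = ∞`). -/
def truncMin (d : ℕ∞) (c : ℝ) : ℝ :=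
  if d = ⊤ then c else min (d.toNat : ℝ) c

/-! ### The diluted mixed p-spin random hypergraph -/

/-- Probability that a given hyperedge is present in the diluted model. -/
def edgeProb (α : ℕ → ℝ) (Δ N : ℕ) (e : Finset (Fin N)) : ℝ :=
  if 2 ≤ e.card ∧ e.card ≤ Δ then α e.card * N / (N.choose e.card) else 0

/-- The law of the diluted mixed `p`-spin random hypergraph: each hyperedge `e` with
`2 ≤ |e| ≤ Δ` is present independently with probability `α_{|e|} N / C(N,|e|)`. -/
def graphMeasure (α : ℕ → ℝ) (Δ N : ℕ) : Measure (Finset (Fin N) → Bool) :=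
  Measure.pi fun e => berBool (edgeProb α Δ N e)

/-- The (random) hyperedge set determined by the indicator `g`. -/
def edgesOf {N : ℕ} (Δ : ℕ) (g : Finset (Fin N) → Bool) : Finset (Finset (Fin N)) :=
  Finset.univ.filter fun e => g e = true ∧ 2 ≤ e.card ∧ e.card ≤ Δ

/-- `λ = Σ_p p(p-1) α_p`. -/
def lamMix (α : ℕ → ℝ) (Δ : ℕ) : ℝ :=
  ∑ p ∈ Finset.Icc 2 Δ, (p : ℝ) * ((p : ℝ) - 1) * α p

/-- `λ' = Σ_p p(p-1)(p-2) α_p`. -/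
def lamMix' (α : ℕ → ℝ) (Δ : ℕ) : ℝ :=
  ∑ p ∈ Finset.Icc 2 Δ, (p : ℝ) * ((p : ℝ) - 1) * ((p : ℝ) - 2) * α p

/-- The exploration (breadth-first search) process `(R_t, I_t, S_t, E_t)` of a hypergraph
started at the vertex `i`. -/
def explore {N : ℕ} (Edges : Finset (Finset (Fin N))) (i : Fin N) :
    ℕ → Finset (Fin N) × Finset (Fin N) × Finset (Fin N) × Finset (Finset (Fin N))
  | 0 => (∅, {i}, Finset.univ.erase i, ∅)
  | t + 1 =>
      let P := explore Edges i t
      let Enew := Edges.filter fun e => (e ∩ P.2.1).Nonempty ∧ e ∩ P.1 = ∅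
      (P.1 ∪ P.2.1, Enew.biUnion fun e => e ∩ P.2.2.1,
        P.2.2.1 \ Enew.biUnion fun e => e ∩ P.2.2.1, Enew)

/-- The set `I_t` of newly explored vertices at step `t`. -/
def Iset {N : ℕ} (Edges : Finset (Finset (Fin N))) (i : Fin N) (t : ℕ) : Finset (Fin N) :=
  (explore Edges i t).2.1

/-- Disorder-and-graph-averaged two-replica observable under the continuous perturbation
in the diluted model. -/
def dilContExp (α : ℕ → ℝ) (Δ N : ℕ) (ρ : ℕ → ℝ → ℝ) (β t : ℝ)
    (f : (Fin N → Bool) → (Fin N → Bool) → ℝ) : ℝ :=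
  ∫ ω : (Finset (Fin N) → Bool) × (Finset (Fin N) → ℝ) × (Finset (Fin N) → ℝ),
    gibbs2 β (ham (edgesOf Δ ω.1) ρ ω.2.1)
      (ham (edgesOf Δ ω.1) ρ (contPerturb t ω.2.1 ω.2.2)) f
    ∂((graphMeasure α Δ N).prod (pairGauss (Finset (Fin N))))

/-- Disorder-and-graph-averaged two-replica observable under the discrete perturbation
in the diluted model. -/
def dilDiscExp (α : ℕ → ℝ) (Δ N : ℕ) (ρ : ℕ → ℝ → ℝ) (β t : ℝ)
    (f : (Fin N → Bool) → (Fin N → Bool) → ℝ) : ℝ :=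
  ∫ ω : (Finset (Fin N) → Bool) ×
      (Finset (Fin N) → ℝ) × (Finset (Fin N) → ℝ) × (Finset (Fin N) → Bool),
    gibbs2 β (ham (edgesOf Δ ω.1) ρ ω.2.1)
      (ham (edgesOf Δ ω.1) ρ (discPerturb ω.2.1 ω.2.2.1 ω.2.2.2)) f
    ∂((graphMeasure α Δ N).prod (tripleGaussBer (Finset (Fin N)) (Real.exp (-t))))

/-! ### The Lévy model -/

/-- Hamiltonian of the Lévy model: `H(σ) = a_N⁻¹ Σ_{i,j} ρ(J_{ij}) σ_i σ_j`. -/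
def levyHam (N : ℕ) (aN : ℝ) (ρ : ℝ → ℝ) (J : Fin N × Fin N → ℝ) (σ : Fin N → Bool) : ℝ :=
  (∑ p : Fin N × Fin N, ρ (J p) * (spin (σ p.1) * spin (σ p.2))) / aN

/-- The normalization `a_N = inf{x > 0 : P(|ρ(J)| > x) ≤ 1/N}`. -/
def levyAN (ρ : ℝ → ℝ) (N : ℕ) : ℝ :=
  sInf {x : ℝ | 0 < x ∧ ((gaussianReal 0 1) {j | x < |ρ j|}).toReal ≤ 1 / N}

/-- The coupled free energy `F_N(t,λ)` of the Lévy model, with the two systems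
perturbed by the Ornstein–Uhlenbeck flow at time `t`. -/
def levyF (N : ℕ) (β aN lam : ℝ) (ρ : ℝ → ℝ) (t : ℝ) : ℝ :=
  (∫ ω : (Fin N × Fin N → ℝ) × (Fin N × Fin N → ℝ) × (Fin N × Fin N → ℝ),
      Real.log (∑ σ : Fin N → Bool, ∑ τ : Fin N → Bool,
        Real.exp (β * levyHam N aN ρ (fun p => Real.exp (-t / 2) * ω.1 p +
              Real.sqrt (1 - Real.exp (-t)) * ω.2.1 p) σ +
          β * levyHam N aN ρ (fun p => Real.exp (-t / 2) * ω.1 p +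
              Real.sqrt (1 - Real.exp (-t)) * ω.2.2 p) τ +
          lam * N * overlap σ τ ^ 2))
    ∂tripleGauss (Fin N × Fin N)) / N

/-- The coupled free energy `F_N(∞,λ)`: the two systems carry independent disorders. -/
def levyFinf (N : ℕ) (β aN lam : ℝ) (ρ : ℝ → ℝ) : ℝ :=
  (∫ ω : (Fin N × Fin N → ℝ) × (Fin N × Fin N → ℝ) × (Fin N × Fin N → ℝ),
      Real.log (∑ σ : Fin N → Bool, ∑ τ : Fin N → Bool,
        Real.exp (β * levyHam N aN ρ ω.2.1 σ + β * levyHam N aN ρ ω.2.2 τ +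
          lam * N * overlap σ τ ^ 2))
    ∂tripleGauss (Fin N × Fin N)) / N

/-- `φ(t) = Σ_r E[L_r(J¹(t)) L_r(J²(t))]` where `J^i(t) = e^{-t/2} J + √(1-e^{-t}) J^i`. -/
def phiFn (k m : ℕ) (L : Fin m → (Fin k → ℝ) → ℝ) (t : ℝ) : ℝ :=
  ∑ r : Fin m, ∫ ω : (Fin k → ℝ) × (Fin k → ℝ) × (Fin k → ℝ),
    L r (fun l => Real.exp (-t / 2) * ω.1 l + Real.sqrt (1 - Real.exp (-t)) * ω.2.1 l) *
      L r (fun l => Real.exp (-t / 2) * ω.1 l + Real.sqrt (1 - Real.exp (-t)) * ω.2.2 l)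
    ∂tripleGauss (Fin k)

/-! ### Auxiliary lemmas for `stmt0` -/

lemma spin_cases (b : Bool) : spin b = 1 ∨ spin b = -1 := by
  cases b <;> simp [spin]

lemma spin_beq (b c : Bool) : spin (b == c) = spin b * spin c := by
  cases b <;> cases c <;> norm_num [spin]

lemma sign_cases {s : ℝ} (h : s = 1 ∨ s = -1) (x : ℝ) : s * (s * x) = x := by
  rcases h with h | h <;> subst h <;> ring

lemma hermite_aeval_neg (m : ℕ) (x : ℝ) :
    Polynomial.aeval (-x) (Polynomial.hermite m) =
      (-1 : ℝ) ^ m * Polynomial.aeval x (Polynomial.hermite m) := by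
  rw [Polynomial.aeval_eq_sum_range (R := ℤ) (-x), Polynomial.aeval_eq_sum_range (R := ℤ) x,
    Finset.mul_sum]
  refine Finset.sum_congr rfl fun k _ => ?_
  by_cases hk : (Polynomial.hermite m).coeff k = 0
  · simp [hk]
  · have hpar : ¬ Odd (m + k) := fun h => hk (Polynomial.coeff_hermite_of_odd_add h)
    have heven : Even (m + k) := Nat.not_odd_iff_even.mp hpar
    have h1 : (-1 : ℝ) ^ (m + k) = 1 := heven.neg_one_pow
    have h2 : (-1 : ℝ) ^ k = (-1 : ℝ) ^ m := by
      have hm : ((-1 : ℝ) ^ m) * ((-1 : ℝ) ^ m * (-1 : ℝ) ^ k) = ((-1 : ℝ) ^ m) * 1 := by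
        rw [← pow_add, h1]
      have hsq : ((-1 : ℝ) ^ m) * ((-1 : ℝ) ^ m) = 1 := by
        rw [← pow_add]; exact Even.neg_one_pow ⟨m, rfl⟩
      calc (-1 : ℝ) ^ k = (((-1:ℝ)^m) * ((-1:ℝ)^m)) * (-1:ℝ)^k := by rw [hsq, one_mul]
        _ = (-1:ℝ)^m := by rw [mul_assoc, hm]; ring
    rw [zsmul_eq_mul, zsmul_eq_mul, neg_pow, h2]
    ring

lemma hermiteFn_sign {s : ℝ} (h : s = 1 ∨ s = -1) (m : ℕ) (x : ℝ) :
    hermiteFn m (s * x) = s ^ m * hermiteFn m x := by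
  rcases h with h | h <;> subst h
  · simp
  · unfold hermiteFn
    rw [show (-1 : ℝ) * x = -x by ring, hermite_aeval_neg]
    ring

lemma rho_sign {ρ : ℕ → ℝ → ℝ} (hρodd : ∀ p x, ρ p (-x) = - ρ p x)
    {s : ℝ} (h : s = 1 ∨ s = -1) (p : ℕ) (x : ℝ) : ρ p (s * x) = s * ρ p x := by
  rcases h with h | h <;> subst h
  · simp
  · rw [show (-1 : ℝ) * x = -x by ring, hρodd]; ring

/-- Coordinatewise multiplication by signs preserves the i.i.d. Gaussian measure. -/
lemma gaussianPi_sign_mp {ι : Type*} [Fintype ι] (c : ι → ℝ)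
    (hc : ∀ e, c e = 1 ∨ c e = -1) :
    MeasurePreserving (fun ω e => c e * ω e) (gaussianPi ι) (gaussianPi ι) := by
  have hmeas : Measurable (fun (ω : ι → ℝ) e => c e * ω e) :=
    measurable_pi_lambda _ fun e => (measurable_pi_apply (X := fun _ : ι => ℝ) e).const_mul (c e)
  refine ⟨hmeas, ?_⟩
  have h1 : ∀ e : ι, (gaussianReal 0 1).map (c e * ·) = gaussianReal 0 1 := by
    intro e
    rw [gaussianReal_map_const_mul (c e)]
    have h2 : (⟨(c e) ^ 2, sq_nonneg _⟩ : NNReal) = 1 := by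
      rcases hc e with h | h <;> rw [h] <;> ext <;> norm_num
    rw [mul_zero, mul_one]
    congr 1
  refine ((Measure.pi_eq fun s hs => ?_)).symm
  rw [Measure.map_apply hmeas (MeasurableSet.univ_pi hs)]
  have hpre : (fun (ω : ι → ℝ) e => c e * ω e) ⁻¹' Set.pi Set.univ s =
      Set.pi Set.univ fun e => (c e * ·) ⁻¹' s e := by
    ext ω; simp [Set.mem_pi]
  rw [hpre, show gaussianPi ι = Measure.pi fun _ => gaussianReal 0 1 from rfl, Measure.pi_pi]
  refine Finset.prod_congr rfl fun e _ => ?_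
  have hma := Measure.map_apply (μ := gaussianReal 0 1) (measurable_const_mul (c e)) (hs e)
  rw [h1 e] at hma
  exact hma.symm

/-- The sign-flip map as a measurable equivalence. -/
def signFlipEquiv {ι : Type*} (c : ι → ℝ)
    (hc : ∀ e, c e = 1 ∨ c e = -1) : (ι → ℝ) ≃ᵐ (ι → ℝ) where
  toFun := fun ω e => c e * ω e
  invFun := fun ω e => c e * ω e
  left_inv := fun ω => funext fun e => sign_cases (hc e) (ω e)
  right_inv := fun ω => funext fun e => sign_cases (hc e) (ω e)
  measurable_toFun := measurable_pi_lambda _ fun e => (measurable_pi_apply (X := fun _ : ι => ℝ) e).const_mul (c e)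
  measurable_invFun := measurable_pi_lambda _ fun e => (measurable_pi_apply (X := fun _ : ι => ℝ) e).const_mul (c e)

lemma beq_beq_cancel (b c : Bool) : (b == (b == c)) = c := by cases b <;> cases c <;> rfl

lemma stmt0_key
    (N : ℕ) (Edges : Finset (Finset (Fin N)))
    (ρ : ℕ → ℝ → ℝ) (hρodd : ∀ p x, ρ p (-x) = - ρ p x)
    (β : ℝ) (a : Fin N → Bool) (i j : Fin N) (n : Finset (Fin N) → ℕ) :
    twoPointCoeff Edges ρ β i j n
        = (spin (a i) * spin (a j) * ∏ e ∈ Esupp n, (∏ v ∈ e, spin (a v)) ^ n e) *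
            twoPointCoeff Edges ρ β i j n := by
  classical
  set s : Finset (Fin N) → ℝ := fun e => ∏ v ∈ e, spin (a v) with hs
  have hsc : ∀ e, s e = 1 ∨ s e = -1 := by
    intro e
    refine Finset.prod_induction _ (fun x => x = 1 ∨ x = -1) ?_ (Or.inl rfl)
      (fun v _ => spin_cases (a v))
    rintro x y (hx | hx) (hy | hy) <;> subst hx <;> subst hy <;> norm_num
  -- the Hamiltonian under sign flip of the disorder
  have hham : ∀ (ω : Finset (Fin N) → ℝ) (σ : Fin N → Bool),
      ham Edges ρ (fun e => s e * ω e) σ = ham Edges ρ ω (fun v => a v == σ v) := by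
    intro ω σ
    unfold ham sigEdge
    refine Finset.sum_congr rfl fun e _ => ?_
    rw [rho_sign hρodd (hsc e)]
    have hprod : ∏ v ∈ e, spin (a v == σ v) = s e * ∏ v ∈ e, spin (σ v) := by
      rw [hs, ← Finset.prod_mul_distrib]
      exact Finset.prod_congr rfl fun v _ => spin_beq _ _
    rw [hprod]; ring
  have hbij : Function.Bijective (fun (σ : Fin N → Bool) v => a v == σ v) := by
    have hinv : Function.Involutive (fun (σ : Fin N → Bool) v => a v == σ v) :=
      fun σ => funext fun v => beq_beq_cancel _ _
    exact hinv.bijective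
  -- the Gibbs average under sign flip of the disorder
  have hgibbs : ∀ (ω : Finset (Fin N) → ℝ),
      gibbs β (ham Edges ρ (fun e => s e * ω e)) (fun σ => spin (σ i) * spin (σ j))
        = (spin (a i) * spin (a j)) *
            gibbs β (ham Edges ρ ω) (fun σ => spin (σ i) * spin (σ j)) := by
    intro ω
    unfold gibbs
    have hden : (∑ σ : Fin N → Bool, Real.exp (β * ham Edges ρ (fun e => s e * ω e) σ))
        = ∑ σ : Fin N → Bool, Real.exp (β * ham Edges ρ ω σ) := by
      simp_rw [hham ω]
      exact Fintype.sum_bijective _ hbij _ _ (fun σ => rfl)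
    have hnum : (∑ σ : Fin N → Bool,
          spin (σ i) * spin (σ j) * Real.exp (β * ham Edges ρ (fun e => s e * ω e) σ))
        = (spin (a i) * spin (a j)) * ∑ σ : Fin N → Bool,
            spin (σ i) * spin (σ j) * Real.exp (β * ham Edges ρ ω σ) := by
      simp_rw [hham ω]
      rw [Fintype.sum_bijective (fun (σ : Fin N → Bool) v => a v == σ v) hbij
        (fun σ => spin (σ i) * spin (σ j) *
          Real.exp (β * ham Edges ρ ω (fun v => a v == σ v)))
        (fun τ => spin (a i == τ i) * spin (a j == τ j) * Real.exp (β * ham Edges ρ ω τ))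
        (fun σ => by simp only [beq_beq_cancel])]
      rw [Finset.mul_sum]
      refine Finset.sum_congr rfl fun τ _ => ?_
      rw [spin_beq, spin_beq]; ring
    rw [hden, hnum, mul_div_assoc]
  -- the Hermite product under sign flip of the disorder
  have hherm : ∀ (ω : Finset (Fin N) → ℝ),
      hermiteProd n (fun e => s e * ω e)
        = (∏ e ∈ Esupp n, s e ^ n e) * hermiteProd n ω := by
    intro ω
    unfold hermiteProd
    have : ∀ e : Finset (Fin N), hermiteFn (n e) (s e * ω e)
        = s e ^ n e * hermiteFn (n e) (ω e) := fun e => hermiteFn_sign (hsc e) _ _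
    simp_rw [this]
    rw [Finset.prod_mul_distrib]
    congr 1
    unfold Esupp
    rw [Finset.prod_filter]
    refine Finset.prod_congr rfl fun e _ => ?_
    by_cases h : n e = 0
    · simp [h]
    · simp [h]
  -- pointwise identity for the integrand
  have hFT : ∀ (ω : Finset (Fin N) → ℝ),
      gibbs β (ham Edges ρ (fun e => s e * ω e)) (fun σ => spin (σ i) * spin (σ j))
          * hermiteProd n (fun e => s e * ω e)
        = (spin (a i) * spin (a j) * ∏ e ∈ Esupp n, s e ^ n e) *
            (gibbs β (ham Edges ρ ω) (fun σ => spin (σ i) * spin (σ j))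
              * hermiteProd n ω) := by
    intro ω
    rw [hgibbs ω, hherm ω]; ring
  -- change of variables
  have hmp := gaussianPi_sign_mp s hsc
  have hemb : MeasurableEmbedding (fun (ω : Finset (Fin N) → ℝ) e => s e * ω e) :=
    (signFlipEquiv s hsc).measurableEmbedding
  have hcv := hmp.integral_comp hemb
    (fun ω => gibbs β (ham Edges ρ ω) (fun σ => spin (σ i) * spin (σ j)) * hermiteProd n ω)
  have hgoal : twoPointCoeff Edges ρ β i j n
      = ∫ ω, gibbs β (ham Edges ρ ω) (fun σ => spin (σ i) * spin (σ j)) * hermiteProd n ω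
          ∂gaussianPi (Finset (Fin N)) := rfl
  have hstep : twoPointCoeff Edges ρ β i j n
      = ∫ ω, (spin (a i) * spin (a j) * ∏ e ∈ Esupp n, s e ^ n e) *
          (gibbs β (ham Edges ρ ω) (fun σ => spin (σ i) * spin (σ j)) * hermiteProd n ω)
          ∂gaussianPi (Finset (Fin N)) := by
    rw [hgoal, ← hcv]
    exact integral_congr_ae (Filter.Eventually.of_forall fun ω => (hFT ω).symm) |>.symm
  have final : twoPointCoeff Edges ρ β i j n
      = (spin (a i) * spin (a j) * ∏ e ∈ Esupp n, s e ^ n e) *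
          twoPointCoeff Edges ρ β i j n := by
    rw [hgoal]
    conv_lhs => rw [← hgoal, hstep]
    rw [integral_const_mul]
  simpa only [hs] using final

/-- (Lemma `coefficient zero`.)  In the generalized short-range model at
inverse temperature `0 ≤ β < ∞`, for every sign pattern `a ∈ {±1}^N`, vertices `i, j`, and
frequency `n ∈ ℤ₊^E`, one has `E[h_n(J) ⟨σ_i σ_j⟩] = I_n(a) E[h_n(J) ⟨σ_i σ_j⟩]` where
`I_n(a) = a_i a_j ∏_{e ∈ E(n)} a_e^{n_e}`; in particular the coefficient vanishes if
`I_n(a) = -1`. -/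
theorem stmt0
    (N Δ : ℕ) (hN : 1 ≤ N) (hΔ : 2 ≤ Δ)
    (Edges : Finset (Finset (Fin N)))
    (hcard : ∀ e ∈ Edges, 2 ≤ e.card ∧ e.card ≤ Δ)
    (ρ : ℕ → ℝ → ℝ) (hρmeas : ∀ p, Measurable (ρ p))
    (hρodd : ∀ p x, ρ p (-x) = - ρ p x)
    (β : ℝ) (hβ : 0 ≤ β)
    (a : Fin N → Bool) (i j : Fin N)
    (n : Finset (Fin N) → ℕ) (hsupp : ∀ e, n e ≠ 0 → e ∈ Edges) :
    twoPointCoeff Edges ρ β i j n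
        = (spin (a i) * spin (a j) * ∏ e ∈ Esupp n, (∏ v ∈ e, spin (a v)) ^ n e) *
            twoPointCoeff Edges ρ β i j n ∧
      (spin (a i) * spin (a j) * ∏ e ∈ Esupp n, (∏ v ∈ e, spin (a v)) ^ n e = -1 →
        twoPointCoeff Edges ρ β i j n = 0) := by
  constructor
  · exact stmt0_key N Edges ρ hρodd β a i j n
  · intro hI
    have hk := stmt0_key N Edges ρ hρodd β a i j n
    rw [hI] at hk
    linarith
end
end

section
/- Consider the generalized short-range model on G = ([N], E) (hyperedges of arbitrary, possibly odd, cardinalities). Let i ≠ j be vertices in [N], n ∈ ℤ_+^E, and r ≥ 1, and assume that the ball B_r(i) of radius r around i, with the hyperedges of G contained in it, is a hypertree. If the Fourier–Hermite coefficient φ̂_{ij}(n) = E[⟨σ_i σ_j⟩ h_n(J)] is nonzero, then i, j ∈ V(n) and |E(n)| ≥ min(r, d(i,j)). -/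
open MeasureTheory ProbabilityTheory Real Finset

noncomputable section

/-! ### Spin models on hypergraphs -/

variable {N : ℕ}

section PathMachinery

variable {N : ℕ}

lemma isBergePath_refl (Edges : Finset (Finset (Fin N))) (v : Fin N) :
    IsBergePath Edges 0 (fun _ => v) (fun k => k.elim0) v v := by
  exact ⟨fun a b _ => Fin.ext (by omega), fun a b _ => a.elim0,
    fun k => k.elim0, rfl, rfl, fun k => k.elim0⟩

lemma hdist_le_of_path {Edges : Finset (Finset (Fin N))} {ℓ : ℕ}
    {vs : Fin (ℓ + 1) → Fin N} {es : Fin ℓ → Finset (Fin N)} {v w : Fin N}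
    (h : IsBergePath Edges ℓ vs es v w) : hdist Edges v w ≤ (ℓ : ℕ∞) :=
  sInf_le ⟨ℓ, vs, es, h, rfl⟩

lemma hdist_self (Edges : Finset (Finset (Fin N))) (v : Fin N) :
    hdist Edges v v = 0 := by
  have := hdist_le_of_path (isBergePath_refl Edges v)
  simpa using this

lemma exists_path_of_hdist_le {Edges : Finset (Finset (Fin N))} {v w : Fin N} {m : ℕ}
    (h : hdist Edges v w ≤ (m : ℕ∞)) :
    ∃ ℓ : ℕ, ℓ ≤ m ∧ ∃ (vs : Fin (ℓ + 1) → Fin N) (es : Fin ℓ → Finset (Fin N)),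
      IsBergePath Edges ℓ vs es v w := by
  by_contra hc
  push_neg at hc
  have hlb : ((m + 1 : ℕ) : ℕ∞) ≤ hdist Edges v w := by
    refine le_sInf ?_
    rintro d ⟨ℓ, vs, es, hp, rfl⟩
    by_cases hle : ℓ ≤ m
    · exact absurd hp (hc ℓ hle vs es)
    · exact_mod_cast Nat.succ_le_of_lt (Nat.lt_of_not_le hle)
  have : ((m + 1 : ℕ) : ℕ∞) ≤ (m : ℕ∞) := hlb.trans h
  exact absurd (by exact_mod_cast this) (by omega)

lemma path_truncate {Edges : Finset (Finset (Fin N))} {ℓ : ℕ}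
    {vs : Fin (ℓ + 1) → Fin N} {es : Fin ℓ → Finset (Fin N)} {v w : Fin N}
    (h : IsBergePath Edges ℓ vs es v w) (k : Fin (ℓ + 1)) :
    IsBergePath Edges k.val (fun m => vs (Fin.castLE (by omega) m))
      (fun m => es (Fin.castLE (by omega : (k : ℕ) ≤ ℓ) m)) v (vs k) := by
  obtain ⟨hvi, hei, hmem, h0, hlast, hstep⟩ := h
  refine ⟨hvi.comp (Fin.castLE_injective _), hei.comp (Fin.castLE_injective _),
    fun m => hmem _, ?_, ?_, ?_⟩
  · show vs (Fin.castLE _ 0) = v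
    rw [show Fin.castLE (by omega : (k:ℕ)+1 ≤ ℓ+1) (0 : Fin (k.val + 1)) = (0 : Fin (ℓ+1)) from
      Fin.ext (by simp)]
    exact h0
  · show vs (Fin.castLE _ (Fin.last k.val)) = vs k
    rw [show Fin.castLE (by omega : (k:ℕ)+1 ≤ ℓ+1) (Fin.last k.val) = k from Fin.ext (by simp)]
  · intro m
    constructor
    · show vs (Fin.castLE _ m.castSucc) ∈ es (Fin.castLE _ m)
      rw [show Fin.castLE (by omega : (k:ℕ)+1 ≤ ℓ+1) m.castSucc
          = (Fin.castLE (by omega : (k:ℕ) ≤ ℓ) m).castSucc from Fin.ext (by simp)]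
      exact (hstep _).1
    · show vs (Fin.castLE _ m.succ) ∈ es (Fin.castLE _ m)
      rw [show Fin.castLE (by omega : (k:ℕ)+1 ≤ ℓ+1) m.succ
          = (Fin.castLE (by omega : (k:ℕ) ≤ ℓ) m).succ from Fin.ext (by simp)]
      exact (hstep _).2

lemma snoc_injective {n : ℕ} {α : Type*} {f : Fin n → α} {x : α}
    (hf : Function.Injective f) (hx : ∀ k, f k ≠ x) :
    Function.Injective (Fin.snoc f x : Fin (n + 1) → α) := by
  intro a b hab
  induction a using Fin.lastCases with
  | last =>
    induction b using Fin.lastCases with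
    | last => rfl
    | cast b =>
      rw [Fin.snoc_last, Fin.snoc_castSucc] at hab
      exact absurd hab.symm (hx b)
  | cast a =>
    induction b using Fin.lastCases with
    | last =>
      rw [Fin.snoc_last, Fin.snoc_castSucc] at hab
      exact absurd hab (hx a)
    | cast b =>
      rw [Fin.snoc_castSucc, Fin.snoc_castSucc] at hab
      exact congrArg _ (hf hab)

lemma path_snoc {Edges : Finset (Finset (Fin N))} {ℓ : ℕ}
    {vs : Fin (ℓ + 1) → Fin N} {es : Fin ℓ → Finset (Fin N)} {v w : Fin N}
    (h : IsBergePath Edges ℓ vs es v w) {e : Finset (Fin N)} {x : Fin N}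
    (he : e ∈ Edges) (hwe : w ∈ e) (hxe : x ∈ e)
    (hx : ∀ k, vs k ≠ x) (hes : ∀ k, es k ≠ e) :
    IsBergePath Edges (ℓ + 1) (Fin.snoc vs x) (Fin.snoc es e) v x := by
  obtain ⟨hvi, hei, hmem, h0, hlast, hstep⟩ := h
  refine ⟨snoc_injective hvi hx, snoc_injective hei hes, ?_, ?_, ?_, ?_⟩
  · intro k
    induction k using Fin.lastCases with
    | last => rw [Fin.snoc_last]; exact he
    | cast k => rw [Fin.snoc_castSucc]; exact hmem k
  · rw [show (0 : Fin (ℓ+2)) = Fin.castSucc (0 : Fin (ℓ+1)) by ext; simp, Fin.snoc_castSucc]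
    exact h0
  · rw [Fin.snoc_last]
  · intro k
    induction k using Fin.lastCases with
    | last =>
      constructor
      · rw [Fin.snoc_last, show (Fin.last ℓ).castSucc = Fin.castSucc (Fin.last ℓ) from rfl,
          Fin.snoc_castSucc, hlast]
        exact hwe
      · rw [Fin.snoc_last, Fin.succ_last, Fin.snoc_last]
        exact hxe
    | cast k =>
      constructor
      · rw [Fin.snoc_castSucc, show (k.castSucc).castSucc = Fin.castSucc (k.castSucc) from rfl,
          Fin.snoc_castSucc]
        exact (hstep k).1
      · rw [Fin.snoc_castSucc, Fin.succ_castSucc, Fin.snoc_castSucc]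
        exact (hstep k).2

lemma hdist_le_succ {Edges : Finset (Finset (Fin N))} {i v w : Fin N} {e : Finset (Fin N)}
    (he : e ∈ Edges) (hv : v ∈ e) (hw : w ∈ e) {m : ℕ}
    (h : hdist Edges i v ≤ (m : ℕ∞)) : hdist Edges i w ≤ ((m + 1 : ℕ) : ℕ∞) := by
  obtain ⟨ℓ, hlm, vs, es, hp⟩ := exists_path_of_hdist_le h
  by_cases hwr : ∃ k, vs k = w
  · obtain ⟨k, hk⟩ := hwr
    have := hdist_le_of_path (path_truncate hp k)
    rw [hk] at this
    refine this.trans ?_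
    exact_mod_cast (by omega : (k : ℕ) ≤ m + 1)
  · push_neg at hwr
    by_cases her : ∃ k, es k = e
    · obtain ⟨k, hk⟩ := her
      have ht := path_truncate hp k.castSucc
      have hin : vs k.castSucc ∈ e := hk ▸ (hp.2.2.2.2.2 k).1
      have hs := path_snoc ht he hin hw (fun k' => hwr _) ?fresh
      case fresh =>
        intro k'
        intro heq
        have hkk : Fin.castLE (by omega : (k.castSucc : ℕ) ≤ ℓ) k' = k := hp.2.1 (heq.trans hk.symm)
        have := congrArg Fin.val hkk
        simp at this
        omega
      have := hdist_le_of_path hs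
      refine this.trans ?_
      have hkℓ : (k : ℕ) < ℓ := k.isLt
      exact_mod_cast (by simp; omega : (k.castSucc : ℕ) + 1 ≤ m + 1)
    · push_neg at her
      have hlastv : vs (Fin.last ℓ) ∈ e := by rw [hp.2.2.2.2.1]; exact hv
      have hs := path_snoc hp he hv hw (fun k => hwr _) (fun k => her _)
      have := hdist_le_of_path hs
      refine this.trans ?_
      exact_mod_cast (by omega : ℓ + 1 ≤ m + 1)

end PathMachinery
section CycleMachinery

variable {N : ℕ}

lemma path_reverse {Edges : Finset (Finset (Fin N))} {ℓ : ℕ}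
    {vs : Fin (ℓ + 1) → Fin N} {es : Fin ℓ → Finset (Fin N)} {v w : Fin N}
    (h : IsBergePath Edges ℓ vs es v w) :
    IsBergePath Edges ℓ (fun m => vs m.rev) (fun a => es a.rev) w v := by
  obtain ⟨hvi, hei, hmem, h0, hlast, hstep⟩ := h
  refine ⟨hvi.comp (Fin.rev_injective), hei.comp (Fin.rev_injective),
    fun a => hmem _, ?_, ?_, ?_⟩
  · show vs (Fin.rev 0) = w
    rw [show Fin.rev (0 : Fin (ℓ+1)) = Fin.last ℓ from Fin.ext (by simp)]
    exact hlast
  · show vs (Fin.rev (Fin.last ℓ)) = v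
    rw [show Fin.rev (Fin.last ℓ) = (0 : Fin (ℓ+1)) from Fin.ext (by simp)]
    exact h0
  · intro a
    constructor
    · show vs (Fin.rev a.castSucc) ∈ es a.rev
      rw [show Fin.rev a.castSucc = (a.rev).succ from Fin.ext (by
        have h1 := a.isLt
        simp only [Fin.val_rev, Fin.val_succ, Fin.coe_castSucc]; omega)]
      exact (hstep a.rev).2
    · show vs (Fin.rev a.succ) ∈ es a.rev
      rw [show Fin.rev a.succ = (a.rev).castSucc from Fin.ext (by
        have h1 := a.isLt
        simp only [Fin.val_rev, Fin.val_succ, Fin.coe_castSucc]; omega)]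
      exact (hstep a.rev).1

lemma cycle_of_chord {F : Finset (Finset (Fin N))} {k : ℕ}
    {vs : Fin (k + 1) → Fin N} {es : Fin k → Finset (Fin N)} {v w : Fin N}
    (hp : IsBergePath F k vs es v w) {s : Fin (k + 1)} (hs : s ≠ Fin.last k)
    {f : Finset (Fin N)} (hf : f ∈ F) (hsf : vs s ∈ f) (hlf : vs (Fin.last k) ∈ f)
    (hfresh : ∀ a : Fin k, (s : ℕ) ≤ (a : ℕ) → f ≠ es a) : HasBergeCycle F := by
  obtain ⟨hvi, hei, hmem, h0, hlast, hstep⟩ := hp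
  have hsk : (s : ℕ) < k := by
    have := s.isLt
    rcases Nat.lt_or_ge (s : ℕ) k with h | h
    · exact h
    · exact absurd (Fin.ext (by simp only [Fin.val_last]; omega : (s : ℕ) = (Fin.last k : ℕ))) hs
  have hL2 : 2 ≤ k - (s : ℕ) + 1 := by omega
  refine ⟨k - (s : ℕ) + 1, fun a => vs ⟨(s : ℕ) + (a : ℕ), by omega⟩,
    fun a => if h : (a : ℕ) < k - (s : ℕ) then es ⟨(s : ℕ) + (a : ℕ), by omega⟩ else f,
    hL2, ?_, ?_, ?_, ?_⟩
  · intro a b hab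
    have := congrArg Fin.val (hvi hab)
    simp at this
    exact Fin.ext (by omega)
  · intro a b hab
    by_cases ha : (a : ℕ) < k - (s : ℕ) <;> by_cases hb : (b : ℕ) < k - (s : ℕ)
    · simp only [dif_pos ha, dif_pos hb] at hab
      have := congrArg Fin.val (hei hab)
      simp at this
      exact Fin.ext (by omega)
    · simp only [dif_pos ha, dif_neg hb] at hab
      exact absurd hab.symm (hfresh _ (by simp))
    · simp only [dif_neg ha, dif_pos hb] at hab
      exact absurd hab (hfresh _ (by simp))
    · have ha' := a.isLt
      have hb' := b.isLt
      exact Fin.ext (by omega)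
  · intro a
    by_cases ha : (a : ℕ) < k - (s : ℕ)
    · simp only [dif_pos ha]; exact hmem _
    · simp only [dif_neg ha]; exact hf
  · intro a
    have haL := a.isLt
    by_cases ha : (a : ℕ) < k - (s : ℕ)
    · constructor
      · simp only [dif_pos ha]
        have := (hstep ⟨(s : ℕ) + (a : ℕ), by omega⟩).1
        convert this using 2
        exact Fin.ext (by simp)
      · have hrot : ((finRotate (k - (s : ℕ) + 1) a) : ℕ) = (a : ℕ) + 1 := by
          rw [finRotate_succ_apply a]
          have hne : a < Fin.last (k - (s : ℕ)) := by
            refine lt_of_le_of_ne (Fin.le_last a) fun h => ?_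
            rw [h] at ha
            simp only [Fin.val_last] at ha
            omega
          exact Fin.val_add_one_of_lt hne
        simp only [dif_pos ha]
        have := (hstep ⟨(s : ℕ) + (a : ℕ), by omega⟩).2
        convert this using 2
        exact Fin.ext (by simp only [Fin.val_succ, hrot]; omega)
    · have haval : (a : ℕ) = k - (s : ℕ) := by omega
      constructor
      · simp only [dif_neg ha]
        rw [show (⟨(s : ℕ) + (a : ℕ), by omega⟩ : Fin (k+1)) = Fin.last k from
          Fin.ext (by simp [haval]; omega)]
        exact hlf
      · have hrot : ((finRotate (k - (s : ℕ) + 1) a) : ℕ) = 0 := by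
          rw [finRotate_succ_apply a]
          have hal : a = Fin.last (k - (s : ℕ)) := Fin.ext (by simp only [Fin.val_last]; omega)
          rw [hal, Fin.last_add_one]
          rfl
        simp only [dif_neg ha]
        rw [show (⟨(s : ℕ) + ((finRotate (k - (s : ℕ) + 1) a) : ℕ), by omega⟩ : Fin (k+1)) = s from
          Fin.ext (by simp only [hrot]; omega)]
        exact hsf

end CycleMachinery
section TreeLemma

variable {N : ℕ}

lemma hasBergeCycle_mono {F F' : Finset (Finset (Fin N))} (hFF : ∀ e ∈ F, e ∈ F')
    (h : HasBergeCycle F) : HasBergeCycle F' := by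
  obtain ⟨ℓ, vs, es, h2, hvi, hei, hmem, hstep⟩ := h
  exact ⟨ℓ, vs, es, h2, hvi, hei, fun k => hFF _ (hmem k), hstep⟩

lemma endpoint_odd {F : Finset (Finset (Fin N))} (hcard : ∀ e ∈ F, 2 ≤ e.card)
    (hacyc : ¬ HasBergeCycle F) {k : ℕ} (hk : 1 ≤ k)
    {vs : Fin (k + 1) → Fin N} {es : Fin k → Finset (Fin N)} {v w : Fin N}
    (hp : IsBergePath F k vs es v w)
    (hmax : ∀ (k' : ℕ) (vs' : Fin (k' + 1) → Fin N) (es' : Fin k' → Finset (Fin N))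
      (v' w' : Fin N), IsBergePath F k' vs' es' v' w' → k' ≤ k) :
    Odd (F.filter (fun e => vs (Fin.last k) ∈ e)).card := by
  classical
  obtain ⟨hvi, hei, hmem, h0, hlast, hstep⟩ := hp
  set b := vs (Fin.last k) with hb
  have hk' : k - 1 < k := by omega
  set elast : Finset (Fin N) := es ⟨k - 1, hk'⟩ with helast
  have hbe : b ∈ elast := by
    have := (hstep ⟨k - 1, hk'⟩).2
    rwa [show (⟨k - 1, hk'⟩ : Fin k).succ = Fin.last k from Fin.ext (by simp; omega)] at this
  have h1 : elast ∈ F.filter (fun e => b ∈ e) := mem_filter.mpr ⟨hmem _, hbe⟩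
  rw [Nat.odd_iff, ← Nat.not_even_iff]
  intro heven
  have h2 : 1 < (F.filter (fun e => b ∈ e)).card := by
    have h0 : (F.filter (fun e => b ∈ e)).card ≠ 0 := Finset.card_ne_zero_of_mem h1
    rcases heven with ⟨c, hc⟩
    omega
  obtain ⟨f, hfmem, hfne⟩ := Finset.exists_mem_ne h2 elast
  have hfF : f ∈ F := (mem_filter.mp hfmem).1
  have hbf : b ∈ f := (mem_filter.mp hfmem).2
  refine hacyc ?_
  by_cases hfr : ∃ t, es t = f
  · obtain ⟨t, ht⟩ := hfr
    have hts : t.succ ≠ Fin.last k := by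
      intro hE
      apply hfne
      rw [← ht, helast]
      congr 1
      have h1 : (t : ℕ) + 1 = k := by simpa using congrArg Fin.val hE
      exact Fin.ext (by simp; omega)
    refine cycle_of_chord ⟨hvi, hei, hmem, h0, hlast, hstep⟩ hts hfF ?_ hbf ?_
    · rw [← ht]; exact (hstep t).2
    · intro a ha heq
      have h1 := congrArg Fin.val (hei (ht.trans heq))
      have h2 : (t : ℕ) + 1 ≤ (a : ℕ) := by simpa using ha
      omega
  · push_neg at hfr
    by_cases hwr : ∃ x ∈ f, ∀ m, vs m ≠ x
    · obtain ⟨x, hxf, hx⟩ := hwr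
      exfalso
      have hsnoc := path_snoc ⟨hvi, hei, hmem, h0, hlast, hstep⟩ hfF (hlast ▸ hbf) hxf hx
        (fun m => (hfr m))
      have := hmax (k + 1) _ _ _ _ hsnoc
      omega
    · push_neg at hwr
      obtain ⟨x, hxf, hxb⟩ := Finset.exists_mem_ne
        (s := f) (by have := hcard f hfF; omega) b
      obtain ⟨m, hm⟩ := hwr x hxf
      have hms : m ≠ Fin.last k := by
        intro hE
        apply hxb
        rw [← hm, hE]
      refine cycle_of_chord ⟨hvi, hei, hmem, h0, hlast, hstep⟩ hms hfF (hm ▸ hxf) hbf ?_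
      intro a _ heq
      exact hfr a heq.symm

end TreeLemma
lemma exists_two_odd {N : ℕ} (F : Finset (Finset (Fin N))) (hF : F.Nonempty)
    (hcard : ∀ e ∈ F, 2 ≤ e.card) (hacyc : ¬ HasBergeCycle F) :
    ∃ v w : Fin N, v ≠ w ∧ Odd (F.filter (fun e => v ∈ e)).card ∧
      Odd (F.filter (fun e => w ∈ e)).card := by
  classical
  set K : Set ℕ := {k : ℕ | ∃ (vs : Fin (k + 1) → Fin N) (es : Fin k → Finset (Fin N))
    (v w : Fin N), IsBergePath F k vs es v w} with hK
  have h1K : 1 ∈ K := by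
    obtain ⟨e, he⟩ := hF
    obtain ⟨u, hu, x, hx, hux⟩ := Finset.one_lt_card.mp (hcard e he)
    refine ⟨fun m => if (m : ℕ) = 0 then u else x, fun _ => e, u, x, ?_,
      fun a b _ => Subsingleton.elim a b, fun _ => he, by simp, ?_, ?_⟩
    · intro a b hab
      have ha := a.isLt
      have hb := b.isLt
      by_cases h0 : (a : ℕ) = 0 <;> by_cases h1 : (b : ℕ) = 0 <;>
        simp only [h0, h1, if_pos, if_neg, if_true, if_false] at hab
      · exact Fin.ext (by omega)
      · exact absurd hab hux
      · exact absurd hab.symm hux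
      · exact Fin.ext (by omega)
    · show (if ((Fin.last 1 : Fin 2) : ℕ) = 0 then u else x) = x
      simp [Fin.val_last]
    · intro m
      have hm : (m : ℕ) = 0 := by omega
      constructor
      · show (if ((m.castSucc : Fin 2) : ℕ) = 0 then u else x) ∈ e
        simp only [Fin.coe_castSucc, hm, if_true, reduceIte]
        exact hu
      · show (if ((m.succ : Fin 2) : ℕ) = 0 then u else x) ∈ e
        simp only [Fin.val_succ, hm]
        simpa using hx
  have hbdd : BddAbove K := by
    refine ⟨N, fun k hkK => ?_⟩
    obtain ⟨vs, es, v, w, hp⟩ := hkK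
    have := Fintype.card_le_of_injective vs hp.1
    have h2 : k + 1 ≤ N := by simpa using this
    omega
  have hmem := Nat.sSup_mem ⟨1, h1K⟩ hbdd
  set k := sSup K with hks
  have hk1 : 1 ≤ k := le_csSup hbdd h1K
  obtain ⟨vs, es, v, w, hp⟩ := hmem
  have hmax : ∀ (k' : ℕ) (vs' : Fin (k' + 1) → Fin N) (es' : Fin k' → Finset (Fin N))
      (v' w' : Fin N), IsBergePath F k' vs' es' v' w' → k' ≤ k :=
    fun k' vs' es' v' w' hp' => le_csSup hbdd ⟨vs', es', v', w', hp'⟩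
  have hodd1 := endpoint_odd hcard hacyc hk1 hp hmax
  have hodd2 := endpoint_odd hcard hacyc hk1 (path_reverse hp) hmax
  refine ⟨vs (Fin.last k), vs (Fin.rev (Fin.last k)), ?_, hodd1, hodd2⟩
  intro hE
  have := congrArg Fin.val (hp.1 hE)
  rw [Fin.val_rev] at this
  simp at this
  omega
section Analytic

variable {N : ℕ}

/-- Flip the spin at vertex `v`. -/
def flipB (v : Fin N) (σ : Fin N → Bool) : Fin N → Bool := fun w => if w = v then !(σ w) else σ w

/-- Flip the sign of the disorder on all hyperedges containing `v`. -/
def flipJ (v : Fin N) (ω : Finset (Fin N) → ℝ) : Finset (Fin N) → ℝ :=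
  fun e => if v ∈ e then -ω e else ω e

/-- Degree of `v` in `n`, with multiplicity. -/
def degn (n : Finset (Fin N) → ℕ) (v : Fin N) : ℕ :=
  ∑ e ∈ Finset.univ.filter (fun e : Finset (Fin N) => v ∈ e), n e

lemma flipB_invol (v : Fin N) (σ : Fin N → Bool) : flipB v (flipB v σ) = σ := by
  funext w
  unfold flipB
  by_cases h : w = v <;> simp [h]

lemma flipJ_invol (v : Fin N) (ω : Finset (Fin N) → ℝ) : flipJ v (flipJ v ω) = ω := by
  funext e
  unfold flipJ
  by_cases h : v ∈ e <;> simp [h]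

lemma spin_not (b : Bool) : spin (!b) = -spin b := by cases b <;> simp [spin]

lemma sigEdge_flipB (v : Fin N) (σ : Fin N → Bool) (e : Finset (Fin N)) :
    sigEdge (flipB v σ) e = (if v ∈ e then (-1 : ℝ) else 1) * sigEdge σ e := by
  classical
  unfold sigEdge
  by_cases hv : v ∈ e
  · rw [if_pos hv, ← Finset.mul_prod_erase e _ hv, ← Finset.mul_prod_erase e (fun w => spin (σ w)) hv]
    have h1 : spin (flipB v σ v) = -spin (σ v) := by
      unfold flipB
      rw [if_pos rfl, spin_not]
    rw [h1]
    have h2 : ∀ w ∈ e.erase v, spin (flipB v σ w) = spin (σ w) := by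
      intro w hw
      unfold flipB
      rw [if_neg (Finset.ne_of_mem_erase hw)]
    rw [Finset.prod_congr rfl h2]
    ring
  · rw [if_neg hv, one_mul]
    refine Finset.prod_congr rfl fun w hw => ?_
    unfold flipB
    rw [if_neg (by rintro rfl; exact hv hw)]

lemma ham_flipJ (Edges : Finset (Finset (Fin N))) (ρ : ℕ → ℝ → ℝ)
    (hρodd : ∀ p x, ρ p (-x) = - ρ p x) (v : Fin N) (ω : Finset (Fin N) → ℝ)
    (σ : Fin N → Bool) :
    ham Edges ρ (flipJ v ω) σ = ham Edges ρ ω (flipB v σ) := by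
  unfold ham
  refine Finset.sum_congr rfl fun e _ => ?_
  rw [sigEdge_flipB]
  unfold flipJ
  by_cases hv : v ∈ e
  · rw [if_pos hv, if_pos hv, hρodd]
    ring
  · rw [if_neg hv, if_neg hv]
    ring

lemma sum_flipB (v : Fin N) (g : (Fin N → Bool) → ℝ) :
    ∑ σ : Fin N → Bool, g (flipB v σ) = ∑ σ : Fin N → Bool, g σ :=
  Function.Bijective.sum_comp (Function.Involutive.bijective (flipB_invol v)) g

lemma gibbs_flipJ (Edges : Finset (Finset (Fin N))) (ρ : ℕ → ℝ → ℝ)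
    (hρodd : ∀ p x, ρ p (-x) = - ρ p x) (β : ℝ) (v : Fin N) (ω : Finset (Fin N) → ℝ)
    (f : (Fin N → Bool) → ℝ) :
    gibbs β (ham Edges ρ (flipJ v ω)) f = gibbs β (ham Edges ρ ω) (fun σ => f (flipB v σ)) := by
  unfold gibbs
  congr 1
  · calc ∑ σ : Fin N → Bool, f σ * Real.exp (β * ham Edges ρ (flipJ v ω) σ)
        = ∑ σ : Fin N → Bool, (fun τ => f (flipB v τ) * Real.exp (β * ham Edges ρ ω τ)) (flipB v σ) := by
          refine Finset.sum_congr rfl fun σ _ => ?_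
          simp only [ham_flipJ Edges ρ hρodd, flipB_invol]
      _ = ∑ σ : Fin N → Bool, f (flipB v σ) * Real.exp (β * ham Edges ρ ω σ) :=
          sum_flipB v (fun τ => f (flipB v τ) * Real.exp (β * ham Edges ρ ω τ))
  · calc ∑ σ : Fin N → Bool, Real.exp (β * ham Edges ρ (flipJ v ω) σ)
        = ∑ σ : Fin N → Bool, (fun τ => Real.exp (β * ham Edges ρ ω τ)) (flipB v σ) := by
          refine Finset.sum_congr rfl fun σ _ => ?_
          simp only [ham_flipJ Edges ρ hρodd]
      _ = _ := sum_flipB v (fun τ => Real.exp (β * ham Edges ρ ω τ))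

lemma gibbs_const_mul (β c : ℝ) (H : (Fin N → Bool) → ℝ) (f : (Fin N → Bool) → ℝ) :
    gibbs β H (fun σ => c * f σ) = c * gibbs β H f := by
  unfold gibbs
  have h : ∀ σ : Fin N → Bool, (fun σ => c * f σ) σ * Real.exp (β * H σ)
      = c * (f σ * Real.exp (β * H σ)) := fun σ => by ring
  rw [Finset.sum_congr rfl (fun σ _ => h σ), ← Finset.mul_sum, mul_div_assoc]

lemma hermiteFn_neg (m : ℕ) (x : ℝ) : hermiteFn m (-x) = (-1 : ℝ) ^ m * hermiteFn m x := by
  unfold hermiteFn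
  rw [← mul_div_assoc]
  congr 1
  rw [Polynomial.aeval_eq_sum_range (R := ℤ) (x := -x),
    Polynomial.aeval_eq_sum_range (R := ℤ) (x := x), Finset.mul_sum]
  refine Finset.sum_congr rfl fun k _ => ?_
  by_cases hc : (Polynomial.hermite m).coeff k = 0
  · simp [hc]
  · have hpar : ¬ Odd (m + k) := fun h => hc (Polynomial.coeff_hermite_of_odd_add h)
    have heven : Even (m + k) := Nat.not_odd_iff_even.mp hpar
    have hsign : (-1 : ℝ) ^ k = (-1 : ℝ) ^ m := by
      rcases Nat.even_or_odd m with hm | hm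
      · have hk : Even k := (Nat.even_add.mp heven).mp hm
        rw [hk.neg_one_pow, hm.neg_one_pow]
      · have hk : Odd k := by
          rcases Nat.even_or_odd k with h | h
          · exact absurd ((Nat.even_add.mp heven).mpr h) (Nat.not_even_iff_odd.mpr hm)
          · exact h
        rw [hk.neg_one_pow, hm.neg_one_pow]
    rw [neg_pow, hsign, mul_smul_comm]

end Analytic
section Analytic2

variable {N : ℕ}

lemma hermiteProd_flipJ (v : Fin N) (n : Finset (Fin N) → ℕ) (ω : Finset (Fin N) → ℝ) :
    hermiteProd n (flipJ v ω) = (-1 : ℝ) ^ (degn n v) * hermiteProd n ω := by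
  classical
  unfold hermiteProd degn
  rw [← Finset.prod_pow_eq_pow_sum, Finset.prod_filter, ← Finset.prod_mul_distrib]
  refine Finset.prod_congr rfl fun e _ => ?_
  unfold flipJ
  by_cases hv : v ∈ e
  · rw [if_pos hv, if_pos hv, hermiteFn_neg]
  · rw [if_neg hv, if_neg hv, one_mul]

lemma measurePreserving_flipJ (v : Fin N) :
    MeasurePreserving (flipJ v) (gaussianPi (Finset (Fin N))) (gaussianPi (Finset (Fin N))) := by
  have h : ∀ e : Finset (Fin N), MeasurePreserving (fun x : ℝ => if v ∈ e then -x else x)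
      (gaussianReal 0 1) (gaussianReal 0 1) := by
    intro e
    by_cases hv : v ∈ e
    · simp only [hv, if_true]
      refine ⟨measurable_neg, ?_⟩
      have h1 : (fun x : ℝ => -x) = (fun x : ℝ => (-1 : ℝ) * x) := by funext x; ring
      rw [h1]
      have h2 := gaussianReal_map_const_mul (μ := 0) (v := 1) (-1 : ℝ)
      have h3 : ((-1 : ℝ) * 0) = (0 : ℝ) := by ring
      have h4 : (⟨(-1 : ℝ)^2, sq_nonneg _⟩ : NNReal) * 1 = 1 := by
        refine Subtype.ext ?_
        norm_num
      rw [h3] at h2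
      convert h2 using 2
      ext; norm_num
    · simp only [hv, if_false]
      exact MeasurePreserving.id _
  exact measurePreserving_pi _ _ h

/-- The sign flip as a measurable equivalence. -/
def flipE (v : Fin N) : (Finset (Fin N) → ℝ) ≃ᵐ (Finset (Fin N) → ℝ) where
  toFun := flipJ v
  invFun := flipJ v
  left_inv := flipJ_invol v
  right_inv := flipJ_invol v
  measurable_toFun := (measurePreserving_flipJ v).measurable
  measurable_invFun := (measurePreserving_flipJ v).measurable

lemma integral_flipJ (v : Fin N) (F : (Finset (Fin N) → ℝ) → ℝ) :
    ∫ ω, F ω ∂gaussianPi (Finset (Fin N)) = ∫ ω, F (flipJ v ω) ∂gaussianPi (Finset (Fin N)) := by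
  conv_lhs => rw [← (measurePreserving_flipJ v).map_eq]
  exact MeasureTheory.integral_map_equiv (flipE v) F

lemma degn_odd_iff {Edges : Finset (Finset (Fin N))} {ρ : ℕ → ℝ → ℝ}
    (hρodd : ∀ p x, ρ p (-x) = - ρ p x) {β : ℝ} {i j : Fin N} (hij : i ≠ j)
    {n : Finset (Fin N) → ℕ} (hne : twoPointCoeff Edges ρ β i j n ≠ 0) (v : Fin N) :
    Odd (degn n v) ↔ (v = i ∨ v = j) := by
  classical
  set s : ℝ := (if i = v then (-1 : ℝ) else 1) * (if j = v then (-1 : ℝ) else 1) with hs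
  have hstep : ∀ σ : Fin N → Bool,
      spin (flipB v σ i) * spin (flipB v σ j) = s * (spin (σ i) * spin (σ j)) := by
    intro σ
    unfold flipB
    by_cases h1 : i = v <;> by_cases h2 : j = v <;>
      simp only [h1, h2, if_true, if_false, reduceIte, spin_not, hs]  <;> ring_nf
  have key : twoPointCoeff Edges ρ β i j n
      = (s * (-1 : ℝ) ^ (degn n v)) * twoPointCoeff Edges ρ β i j n := by
    unfold twoPointCoeff
    conv_lhs => rw [integral_flipJ v]
    have hpt : ∀ ω : Finset (Fin N) → ℝ,
        gibbs β (ham Edges ρ (flipJ v ω)) (fun σ => spin (σ i) * spin (σ j))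
            * hermiteProd n (flipJ v ω)
        = (s * (-1 : ℝ) ^ (degn n v)) *
            (gibbs β (ham Edges ρ ω) (fun σ => spin (σ i) * spin (σ j)) * hermiteProd n ω) := by
      intro ω
      rw [gibbs_flipJ Edges ρ hρodd, hermiteProd_flipJ]
      have h2 : (fun σ => spin (flipB v σ i) * spin (flipB v σ j))
          = fun σ => s * (spin (σ i) * spin (σ j)) := funext hstep
      rw [h2, gibbs_const_mul]
      ring
    simp_rw [hpt]
    rw [MeasureTheory.integral_const_mul]
  have hc : s * (-1 : ℝ) ^ (degn n v) = 1 := by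
    by_contra hcon
    have hsval : s = 1 ∨ s = -1 := by
      rw [hs]
      by_cases h1 : i = v <;> by_cases h2 : j = v <;> simp [h1, h2]
    have hpow : (-1 : ℝ) ^ (degn n v) = 1 ∨ (-1 : ℝ) ^ (degn n v) = -1 := by
      rcases Nat.even_or_odd (degn n v) with h | h
      · exact Or.inl h.neg_one_pow
      · exact Or.inr h.neg_one_pow
    have hneg : s * (-1 : ℝ) ^ (degn n v) = -1 := by
      rcases hsval with h1 | h1 <;> rcases hpow with h2 | h2 <;> rw [h1, h2] at hcon ⊢ <;> norm_num at hcon <;> norm_num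
    rw [hneg] at key
    apply hne
    linarith
  constructor
  · intro hodd
    by_contra hv
    push_neg at hv
    have hs1 : s = 1 := by
      rw [hs, if_neg (fun h => hv.1 h.symm), if_neg (fun h => hv.2 h.symm)]
      norm_num
    rw [hs1, one_mul, hodd.neg_one_pow] at hc
    norm_num at hc
  · intro hv
    rcases Nat.even_or_odd (degn n v) with he | ho
    · exfalso
      rw [he.neg_one_pow, mul_one] at hc
      rcases hv with rfl | rfl
      · rw [hs, if_pos rfl, if_neg (fun h => hij h.symm)] at hc
        norm_num at hc
      · rw [hs, if_neg hij, if_pos rfl] at hc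
        norm_num at hc
    · exact ho

end Analytic2
section Final

variable {N : ℕ}

lemma mem_hball_iff {Edges : Finset (Finset (Fin N))} {i w : Fin N} {r : ℕ} :
    w ∈ hball Edges i r ↔ hdist Edges i w ≤ (r : ℕ∞) := by
  classical
  unfold hball
  simp

lemma crossing_exists {Edges : Finset (Finset (Fin N))}
    (hcard : ∀ e ∈ Edges, 2 ≤ e.card) {i j : Fin N} {r : ℕ}
    (hacyclic : ¬ HasBergeCycle (Edges.filter fun e => e ⊆ hball Edges i r))
    {n : Finset (Fin N) → ℕ} (hsupp : ∀ e, n e ≠ 0 → e ∈ Edges)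
    (hodd : ∀ v : Fin N, Odd (degn n v) ↔ (v = i ∨ v = j))
    (hij : i ≠ j) {ℓ : ℕ} (hℓr : ℓ < r) (hℓj : ¬ hdist Edges i j ≤ (ℓ : ℕ∞)) :
    ∃ e, n e ≠ 0 ∧ (∃ v ∈ e, hdist Edges i v ≤ (ℓ : ℕ∞)) ∧
      (∃ w ∈ e, ¬ hdist Edges i w ≤ (ℓ : ℕ∞)) := by
  classical
  by_contra hcon
  push_neg at hcon
  -- hcon : ∀ e, n e ≠ 0 → (∃ v ∈ e, d ≤ ℓ) → ∀ w ∈ e, d ≤ ℓ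
  set F : Finset (Finset (Fin N)) :=
    Finset.univ.filter (fun e => Odd (n e) ∧ ∀ w ∈ e, hdist Edges i w ≤ (ℓ : ℕ∞)) with hF
  -- F is nonempty
  have hdi : Odd (degn n i) := (hodd i).mpr (Or.inl rfl)
  have hex : ∃ e, i ∈ e ∧ Odd (n e) := by
    by_contra hno
    push_neg at hno
    have : Even (degn n i) := by
      refine Finset.even_sum _ fun e he => ?_
      rcases Nat.even_or_odd (n e) with h | h
      · exact h
      · exact absurd h (hno e (by simpa using he))
    exact (Nat.not_even_iff_odd.mpr hdi) this
  obtain ⟨e₀, he₀i, he₀odd⟩ := hex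
  have he₀S : ∀ w ∈ e₀, hdist Edges i w ≤ (ℓ : ℕ∞) :=
    hcon e₀ (by rintro h; rw [h] at he₀odd; simp [Nat.odd_iff] at he₀odd)
      ⟨i, he₀i, by rw [hdist_self]; exact zero_le⟩
  have hFne : F.Nonempty := ⟨e₀, by rw [hF]; exact mem_filter.mpr ⟨mem_univ _, he₀odd, he₀S⟩⟩
  -- F has no Berge cycle
  have hFsub : ∀ e ∈ F, e ∈ Edges.filter fun e => e ⊆ hball Edges i r := by
    intro e he
    rw [hF] at he
    obtain ⟨-, hodde, hsub⟩ := mem_filter.mp he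
    refine mem_filter.mpr ⟨hsupp e (fun h => by rw [h] at hodde; simp [Nat.odd_iff] at hodde), ?_⟩
    intro w hw
    rw [mem_hball_iff]
    exact (hsub w hw).trans (by exact_mod_cast Nat.le_of_lt hℓr)
  have hFacyc : ¬ HasBergeCycle F := fun h => hacyclic (hasBergeCycle_mono hFsub h)
  have hFcard : ∀ e ∈ F, 2 ≤ e.card := fun e he => hcard e (mem_filter.mp (hFsub e he)).1
  obtain ⟨v, w, hvw, hov, how⟩ := exists_two_odd F hFne hFcard hFacyc
  -- vertices of odd F-degree lie in the ball of radius ℓ and have odd n-degree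
  have htrans : ∀ x : Fin N, Odd ((F.filter (fun e => x ∈ e)).card) →
      hdist Edges i x ≤ (ℓ : ℕ∞) ∧ Odd (degn n x) := by
    intro x hx
    have hxS : hdist Edges i x ≤ (ℓ : ℕ∞) := by
      have hne0 : (F.filter (fun e => x ∈ e)).Nonempty := by
        rw [← Finset.card_ne_zero]
        intro h0
        rw [h0] at hx
        simp [Nat.odd_iff] at hx
      obtain ⟨e, he⟩ := hne0
      obtain ⟨heF, hxe⟩ := mem_filter.mp he
      obtain ⟨-, -, hsub⟩ := mem_filter.mp (hF ▸ heF)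
      exact hsub x hxe
    refine ⟨hxS, ?_⟩
    -- degn n x has the same parity as the F-degree of x
    have hkey : (Finset.univ.filter (fun e : Finset (Fin N) => x ∈ e)).filter
        (fun e => Odd (n e)) = F.filter (fun e => x ∈ e) := by
      ext e
      simp only [Finset.mem_filter, Finset.mem_univ, true_and, hF]
      constructor
      · rintro ⟨hxe, hodde⟩
        refine ⟨⟨hodde, ?_⟩, hxe⟩
        exact hcon e (fun h => by rw [h] at hodde; simp [Nat.odd_iff] at hodde)
          ⟨x, hxe, hxS⟩
      · rintro ⟨⟨hodde, -⟩, hxe⟩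
        exact ⟨hxe, hodde⟩
    rw [degn, Finset.odd_sum_iff_odd_card_odd, hkey]
    exact hx
  obtain ⟨hvS, hvdeg⟩ := htrans v hov
  obtain ⟨hwS, hwdeg⟩ := htrans w how
  have hvij := (hodd v).mp hvdeg
  have hwij := (hodd w).mp hwdeg
  rcases hvij with rfl | rfl
  · rcases hwij with rfl | rfl
    · exact hvw rfl
    · exact hℓj hwS
  · exact hℓj hvS

end Final

/-- In the generalized short-range model, if the ball of radius `r ≥ 1`
around `i` (with the hyperedges of `G` contained in it) is a hypertree, then a nonvanishing
Fourier–Hermite coefficient `φ̂_{ij}(n) ≠ 0` forces `i, j ∈ V(n)` and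
`|E(n)| ≥ min(r, d(i,j))`. -/
theorem stmt2
    (N Δ : ℕ) (hN : 1 ≤ N) (hΔ : 2 ≤ Δ)
    (Edges : Finset (Finset (Fin N)))
    (hcard : ∀ e ∈ Edges, 2 ≤ e.card ∧ e.card ≤ Δ)
    (ρ : ℕ → ℝ → ℝ) (hρmeas : ∀ p, Measurable (ρ p))
    (hρodd : ∀ p x, ρ p (-x) = - ρ p x)
    (β : ℝ) (hβ : 0 ≤ β)
    (i j : Fin N) (hij : i ≠ j) (r : ℕ) (hr : 1 ≤ r)
    (hconn : ∀ v ∈ hball Edges i r, ∀ w ∈ hball Edges i r,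
      ∃ (ℓ : ℕ) (vs : Fin (ℓ + 1) → Fin N) (es : Fin ℓ → Finset (Fin N)),
        IsBergePath (Edges.filter fun e => e ⊆ hball Edges i r) ℓ vs es v w)
    (hacyclic : ¬ HasBergeCycle (Edges.filter fun e => e ⊆ hball Edges i r))
    (n : Finset (Fin N) → ℕ) (hsupp : ∀ e, n e ≠ 0 → e ∈ Edges)
    (hne : twoPointCoeff Edges ρ β i j n ≠ 0) :
    i ∈ Vsupp n ∧ j ∈ Vsupp n ∧
      min (r : ℕ∞) (hdist Edges i j) ≤ ((Esupp n).card : ℕ∞) := by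
  classical
  have hparity : ∀ v : Fin N, Odd (degn n v) ↔ (v = i ∨ v = j) :=
    fun v => degn_odd_iff hρodd hij hne v
  have hmemV : ∀ v : Fin N, Odd (degn n v) → v ∈ Vsupp n := by
    intro v hv
    have hex : ∃ e, v ∈ e ∧ Odd (n e) := by
      by_contra hno
      push_neg at hno
      have : Even (degn n v) := by
        refine Finset.even_sum _ fun e he => ?_
        rcases Nat.even_or_odd (n e) with h | h
        · exact h
        · exact absurd h (hno e (by simpa using he))
      exact (Nat.not_even_iff_odd.mpr hv) this
    obtain ⟨e, hve, hodde⟩ := hex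
    unfold Vsupp Esupp
    rw [Finset.mem_biUnion]
    exact ⟨e, Finset.mem_filter.mpr ⟨Finset.mem_univ _,
      fun h => by rw [h] at hodde; simp [Nat.odd_iff] at hodde⟩, hve⟩
  refine ⟨hmemV i ((hparity i).mpr (Or.inl rfl)), hmemV j ((hparity j).mpr (Or.inr rfl)), ?_⟩
  have hcard2 : ∀ e ∈ Edges, 2 ≤ e.card := fun e he => (hcard e he).1
  set P : ℕ → Finset (Fin N) → Prop := fun ℓ e =>
    (∃ v ∈ e, hdist Edges i v ≤ (ℓ : ℕ∞)) ∧ (∃ w ∈ e, ¬ hdist Edges i w ≤ (ℓ : ℕ∞)) with hP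
  have hkey : ∀ ℓ : ℕ, ℓ < r → ¬ hdist Edges i j ≤ (ℓ : ℕ∞) → ∃ e ∈ Esupp n, P ℓ e := by
    intro ℓ h1 h2
    obtain ⟨e, hn0, hcr1, hcr2⟩ := crossing_exists hcard2 hacyclic hsupp hparity hij h1 h2
    exact ⟨e, Finset.mem_filter.mpr ⟨Finset.mem_univ _, hn0⟩, hcr1, hcr2⟩
  have huniq : ∀ (ℓ ℓ' : ℕ), ∀ e ∈ Esupp n, P ℓ e → P ℓ' e → ℓ = ℓ' := by
    intro ℓ ℓ' e he h h'
    by_contra hne'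
    have hEe : e ∈ Edges := hsupp e (Finset.mem_filter.mp he).2
    rcases Nat.lt_or_ge ℓ ℓ' with hlt | hge
    · obtain ⟨v, hv, hvd⟩ := h.1
      obtain ⟨w, hw, hwd⟩ := h'.2
      refine hwd ((hdist_le_succ hEe hv hw hvd).trans ?_)
      exact_mod_cast hlt
    · have hlt : ℓ' < ℓ := by omega
      obtain ⟨v, hv, hvd⟩ := h'.1
      obtain ⟨w, hw, hwd⟩ := h.2
      refine hwd ((hdist_le_succ hEe hv hw hvd).trans ?_)
      exact_mod_cast hlt
  have hcnt : ∀ T : ℕ, (∀ ℓ, ℓ < T → ∃ e ∈ Esupp n, P ℓ e) → T ≤ (Esupp n).card := by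
    intro T hT
    have hmap : ∀ ℓ ∈ Finset.range T,
        (if h : ∃ e ∈ Esupp n, P ℓ e then h.choose else ∅) ∈ Esupp n := by
      intro ℓ hℓ
      have h := hT ℓ (Finset.mem_range.mp hℓ)
      rw [dif_pos h]
      exact h.choose_spec.1
    have hinj : Set.InjOn (fun ℓ => if h : ∃ e ∈ Esupp n, P ℓ e then h.choose else ∅)
        (Finset.range T) := by
      intro a ha b hb hab
      have hha := hT a (Finset.mem_range.mp ha)
      have hhb := hT b (Finset.mem_range.mp hb)
      simp only [dif_pos hha, dif_pos hhb] at hab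
      refine huniq a b _ hha.choose_spec.1 hha.choose_spec.2 ?_
      rw [hab]
      exact hhb.choose_spec.2
    have := Finset.card_le_card_of_injOn _ hmap hinj
    simpa using this
  by_cases htop : hdist Edges i j = ⊤
  · rw [htop]
    rw [min_eq_left (le_top : (r : ℕ∞) ≤ ⊤)]
    have hle : r ≤ (Esupp n).card := hcnt r (fun ℓ hℓ => hkey ℓ hℓ (by rw [htop]; simp))
    exact_mod_cast hle
  · have hd : ((hdist Edges i j).toNat : ℕ∞) = hdist Edges i j := ENat.coe_toNat htop
    rw [← hd]
    have hmincast : min (r : ℕ∞) (((hdist Edges i j).toNat : ℕ) : ℕ∞)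
        = ((min r (hdist Edges i j).toNat : ℕ) : ℕ∞) := by
      rcases le_total r (hdist Edges i j).toNat with h | h
      · rw [min_eq_left h, min_eq_left (by exact_mod_cast h)]
      · rw [min_eq_right h, min_eq_right (by exact_mod_cast h)]
    rw [hmincast]
    have hle : min r (hdist Edges i j).toNat ≤ (Esupp n).card := by
      refine hcnt _ fun ℓ hℓ => ?_
      refine hkey ℓ (by omega) ?_
      rw [← hd]
      have : ℓ < (hdist Edges i j).toNat := by omega
      exact not_le.mpr (by exact_mod_cast this)
    exact_mod_cast hle
end
end
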